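/- arXiv:0810.2781 — 12 statements merged into one kernel-verified Lean document; each statement's English description precedes it below -/
import Mathlib

section
/- If H admits a pseudo-tree structure, then the set of all rows of H admits a triangular enumeration. (This is the combinatorial content of Lemma 1: any LDPC code whose Tanner graph is a pseudo-tree is successfully encoded by the label-and-decide algorithm.) -/
/-- A pseudo-tree structure on a parity check matrix `H` over GF(2): an injective
assignment `p` of a parent bit node (column) to each check node (row), together with a
tier map `t`, such that each check node is adjacent to its parent, and whenever a check
node `i` is adjacent to the parent of a different check node `i'`, the tier of `i` is
strictly smaller than the tier of `i'`. -/
def PseudoTreeStructure {M N : Type*} (H : Matrix M N (ZMod 2)) : Prop :=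
  ∃ (p : M → N) (t : M → ℕ),
    Function.Injective p ∧
    (∀ i, H i (p i) = 1) ∧
    (∀ i i', i ≠ i' → H i (p i') = 1 → t i < t i')

/-- A triangular enumeration of a finite set `R` of rows of `H`: an enumeration
`e` of `R` together with pairwise distinct columns `c` such that `H (e k) (c k) = 1`
for every `k`, and `H (e k) (c l) = 0` whenever `k < l`. -/
def TriangularEnum {M N : Type*} [DecidableEq M] (H : Matrix M N (ZMod 2))
    (R : Finset M) : Prop :=
  ∃ (e : Fin R.card → M) (c : Fin R.card → N),
    Function.Injective e ∧ (∀ k, e k ∈ R) ∧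
    Function.Injective c ∧
    (∀ k, H (e k) (c k) = 1) ∧
    (∀ k l, k < l → H (e k) (c l) = 0)

theorem pseudoTree_triangularEnum {M N : Type*} [Fintype M] [DecidableEq M] [Fintype N]
    (H : Matrix M N (ZMod 2)) (hPT : PseudoTreeStructure H) :
    TriangularEnum H Finset.univ := by
  obtain ⟨p, t, hpInj, hAdj, hTier⟩ := hPT
  set r : M → M → Prop := fun a b => t b ≤ t a with hr
  have : DecidableRel r := fun a b => inferInstanceAs (Decidable (t b ≤ t a))
  set L := List.insertionSort r (Finset.univ : Finset M).toList with hL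
  have hperm : List.Perm L (Finset.univ : Finset M).toList := List.perm_insertionSort r _
  have hnodup : L.Nodup := hperm.nodup_iff.mpr (Finset.nodup_toList _)
  have hlen : L.length = (Finset.univ : Finset M).card := by
    rw [hperm.length_eq, Finset.length_toList]
  haveI : IsTotal M r := ⟨fun a b => Nat.le_total (t b) (t a)⟩
  haveI : IsTrans M r := ⟨fun a b c hab hbc => le_trans hbc hab⟩
  have hsorted : List.Pairwise r L := List.pairwise_insertionSort r _
  set e : Fin (Finset.univ : Finset M).card → M := fun k => L.get (Fin.cast hlen.symm k)
    with he
  have heInj : Function.Injective e := by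
    intro a b hab
    have h2 := (List.nodup_iff_injective_get.mp hnodup) hab
    have h3 := congrArg Fin.val h2
    simp only [Fin.coe_cast] at h3
    exact Fin.ext h3
  have hmono : ∀ k l : Fin (Finset.univ : Finset M).card, k < l → t (e l) ≤ t (e k) := by
    intro k l hkl
    exact (List.pairwise_iff_get.mp hsorted) _ _ hkl
  refine ⟨e, fun k => p (e k), heInj, fun k => Finset.mem_univ _, hpInj.comp heInj,
    fun k => hAdj _, ?_⟩
  intro k l hkl
  by_contra hne
  have h1 : H (e k) (p (e l)) = 1 := by
    have : ∀ a : ZMod 2, a ≠ 0 → a = 1 := by decide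
    exact this _ hne
  have hne' : e k ≠ e l := fun h => hkl.ne (heInj h)
  exact absurd (hmono k l hkl) (Nat.not_le.mpr (hTier _ _ hne' h1))
end

section
/- If H admits a pseudo-tree structure, then for every nonempty set R of rows of H there exists a column whose weight within R is exactly 1. In particular, H contains no encoding stopping set. (Lemma: any pseudo-tree or union of pseudo-trees does not contain encoding stopping sets.) -/
/-- An encoding stopping set of `H`: a nonempty set `R` of rows whose rows are linearly
independent over GF(2) and such that every column in the support of `R` has weight at
least `2` within `R`. -/
def IsEncodingStoppingSet {M N : Type*} [DecidableEq M] (H : Matrix M N (ZMod 2))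
    (R : Finset M) : Prop :=
  R.Nonempty ∧
  LinearIndependent (ZMod 2) (fun i : R => H i) ∧
  ∀ j, (∃ i ∈ R, H i j = 1) → 2 ≤ (R.filter (fun i => H i j = 1)).card

theorem pseudoTree_no_encodingStoppingSet {M N : Type*} [Fintype M] [DecidableEq M]
    [Fintype N] (H : Matrix M N (ZMod 2)) (hPT : PseudoTreeStructure H) :
    (∀ R : Finset M, R.Nonempty →
      ∃ j, (R.filter (fun i => H i j = 1)).card = 1) ∧
    ¬ ∃ R : Finset M, IsEncodingStoppingSet H R := by
  obtain ⟨p, t, _hp, hpar, htier⟩ := hPT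
  have main : ∀ R : Finset M, R.Nonempty →
      ∃ j, (R.filter (fun i => H i j = 1)).card = 1 := by
    intro R hR
    obtain ⟨i₀, hi₀, hmin⟩ := R.exists_min_image t hR
    refine ⟨p i₀, ?_⟩
    have : R.filter (fun i => H i (p i₀) = 1) = {i₀} := by
      apply Finset.eq_singleton_iff_unique_mem.mpr
      refine ⟨Finset.mem_filter.mpr ⟨hi₀, hpar i₀⟩, ?_⟩
      intro i hi
      obtain ⟨hiR, hH⟩ := Finset.mem_filter.mp hi
      by_contra hne
      exact absurd (htier i i₀ hne hH) (not_lt.mpr (hmin i hiR))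
    rw [this, Finset.card_singleton]
  refine ⟨main, ?_⟩
  rintro ⟨R, hne, _, hwt⟩
  obtain ⟨j, hj⟩ := main R hne
  have hex : ∃ i ∈ R, H i j = 1 := by
    obtain ⟨i, hi⟩ := Finset.card_eq_one.mp hj
    have := hi ▸ Finset.mem_singleton_self i
    exact ⟨i, (Finset.mem_filter.mp this).1, (Finset.mem_filter.mp this).2⟩
  have := hwt j hex
  omega
end

section
/- Let R be a nonempty set of rows of H such that every column in the support of R has weight at least 2 within R. Then R admits no triangular enumeration. (This is the combinatorial content of Theorem 1: an encoding stopping set cannot be encoded successfully by the label-and-decide algorithm.) -/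
theorem encodingStoppingSet_no_triangularEnum {M N : Type*} [Fintype M] [DecidableEq M]
    [Fintype N] (H : Matrix M N (ZMod 2)) (R : Finset M) (hne : R.Nonempty)
    (hwt : ∀ j, (∃ i ∈ R, H i j = 1) → 2 ≤ (R.filter (fun i => H i j = 1)).card) :
    ¬ TriangularEnum H R := by
  rintro ⟨e, c, he, heR, _, h1, h0⟩
  have hm : 0 < R.card := Finset.card_pos.mpr hne
  -- e is a bijection onto R
  set e' : Fin R.card → R := fun k => ⟨e k, heR k⟩ with he'
  have he'inj : Function.Injective e' := fun a b h => he (congrArg Subtype.val h)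
  have hbij : Function.Bijective e' := by
    rw [Fintype.bijective_iff_injective_and_card]
    exact ⟨he'inj, by simp⟩
  set k0 : Fin R.card := ⟨R.card - 1, Nat.sub_lt hm one_pos⟩ with hk0
  have hlast : ∀ k : Fin R.card, k ≤ k0 := fun k => Nat.le_sub_one_of_lt k.isLt
  have hjw : 2 ≤ (R.filter (fun i => H i (c k0) = 1)).card :=
    hwt _ ⟨e k0, heR k0, h1 k0⟩
  obtain ⟨i, hi, hine⟩ := Finset.exists_mem_ne (s := R.filter (fun i => H i (c k0) = 1)) (by omega) (e k0)
  simp only [Finset.mem_filter] at hi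
  obtain ⟨k, hk⟩ := hbij.2 ⟨i, hi.1⟩
  have hik : e k = i := congrArg Subtype.val hk
  have hklt : k < k0 := lt_of_le_of_ne (hlast k) (fun h => hine (h ▸ hik ▸ rfl))
  have := h0 k k0 hklt
  rw [hik, hi.2] at this
  exact one_ne_zero this
end

section
/- Suppose the rows of H are linearly independent over GF(2) and H contains no encoding stopping set. Then the set of all rows of H admits a triangular enumeration. (Theorem 2: if a Tanner graph does not contain any encoding stopping set, then it can be encoded by the label-and-decide algorithm.) -/
theorem aux_triang {M N : Type*} [Fintype M] [DecidableEq M]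
    [Fintype N] (H : Matrix M N (ZMod 2))
    (hno : ¬ ∃ R : Finset M, IsEncodingStoppingSet H R) :
    ∀ n (R : Finset M), R.card = n →
      LinearIndependent (ZMod 2) (fun i : R => H i) → TriangularEnum H R := by
  intro n
  induction n with
  | zero =>
    intro R hR _
    refine ⟨fun k => absurd k.isLt (by omega), fun k => absurd k.isLt (by omega),
      ?_, ?_, ?_, ?_, ?_⟩ <;>
    · intro k
      exact absurd k.isLt (by omega)
  | succ n ih =>
    intro R hR hli
    have hne : R.Nonempty := Finset.card_pos.mp (by omega)
    have hnot : ¬ ∀ j, (∃ i ∈ R, H i j = 1) → 2 ≤ (R.filter (fun i => H i j = 1)).card := by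
      intro h; exact hno ⟨R, hne, hli, h⟩
    push_neg at hnot
    obtain ⟨j, ⟨i0, hi0R, hi0⟩, hcard⟩ := hnot
    have h1 : (R.filter (fun i => H i j = 1)).card = 1 := by
      have hmem : i0 ∈ R.filter (fun i => H i j = 1) := Finset.mem_filter.mpr ⟨hi0R, hi0⟩
      have := Finset.card_pos.mpr ⟨i0, hmem⟩
      omega
    obtain ⟨i, hfil⟩ := Finset.card_eq_one.mp h1
    have hisingle : i ∈ R.filter (fun i => H i j = 1) := by
      rw [hfil]; exact Finset.mem_singleton_self i
    have hiR : i ∈ R := (Finset.mem_filter.mp hisingle).1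
    have hij : H i j = 1 := (Finset.mem_filter.mp hisingle).2
    have huniq : ∀ i' ∈ R, H i' j = 1 → i' = i := by
      intro i' h1' h2'
      have : i' ∈ R.filter (fun i => H i j = 1) := Finset.mem_filter.mpr ⟨h1', h2'⟩
      rw [hfil] at this
      exact Finset.mem_singleton.mp this
    set R' := R.erase i with hR'def
    have hR' : R'.card = n := by
      rw [hR'def, Finset.card_erase_of_mem hiR]; omega
    have hli' : LinearIndependent (ZMod 2) (fun x : R' => H x) := by
      exact hli.comp (fun x : R' => (⟨x.1, Finset.mem_of_mem_erase x.2⟩ : R))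
        (fun a b h => by have h2 := congrArg Subtype.val h; exact Subtype.ext h2)
    obtain ⟨e', c', he'inj, he'mem, hc'inj, hc'1, hc'0⟩ := ih R' hR' hli'
    have hcast : R.card = R'.card + 1 := by omega
    have hzero : ∀ k, H (e' k) j = 0 := by
      intro k
      have hne' : e' k ≠ i := Finset.ne_of_mem_erase (he'mem k)
      have hnot1 : H (e' k) j ≠ 1 := fun h =>
        hne' (huniq _ (Finset.mem_of_mem_erase (he'mem k)) h)
      have h2 : ∀ x : ZMod 2, x = 0 ∨ x = 1 := by decide
      rcases h2 (H (e' k) j) with h | h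
      · exact h
      · exact absurd h hnot1
    have hcj : ∀ k, c' k ≠ j := by
      intro k h
      have h1k := hc'1 k
      rw [h, hzero k] at h1k
      exact absurd h1k (by decide)
    have hE : Function.Injective (Fin.snoc e' i : Fin (R'.card + 1) → M) := by
      intro a b hab
      induction a using Fin.lastCases with
      | last =>
        induction b using Fin.lastCases with
        | last => rfl
        | cast b'' =>
          simp only [Fin.snoc_last, Fin.snoc_castSucc] at hab
          exact absurd hab.symm (Finset.ne_of_mem_erase (he'mem b''))
      | cast a'' =>
        induction b using Fin.lastCases with
        | last =>
          simp only [Fin.snoc_last, Fin.snoc_castSucc] at hab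
          exact absurd hab (Finset.ne_of_mem_erase (he'mem a''))
        | cast b'' =>
          simp only [Fin.snoc_castSucc] at hab
          exact congrArg Fin.castSucc (he'inj hab)
    have hC : Function.Injective (Fin.snoc c' j : Fin (R'.card + 1) → N) := by
      intro a b hab
      induction a using Fin.lastCases with
      | last =>
        induction b using Fin.lastCases with
        | last => rfl
        | cast b'' =>
          simp only [Fin.snoc_last, Fin.snoc_castSucc] at hab
          exact absurd hab.symm (hcj b'')
      | cast a'' =>
        induction b using Fin.lastCases with
        | last =>
          simp only [Fin.snoc_last, Fin.snoc_castSucc] at hab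
          exact absurd hab (hcj a'')
        | cast b'' =>
          simp only [Fin.snoc_castSucc] at hab
          exact congrArg Fin.castSucc (hc'inj hab)
    have hMem : ∀ a : Fin (R'.card + 1), (Fin.snoc e' i : Fin (R'.card + 1) → M) a ∈ R := by
      intro a
      induction a using Fin.lastCases with
      | last => simpa using hiR
      | cast a'' =>
        simp only [Fin.snoc_castSucc]
        exact Finset.mem_of_mem_erase (he'mem a'')
    have hDiag : ∀ a : Fin (R'.card + 1),
        H ((Fin.snoc e' i : Fin (R'.card + 1) → M) a) ((Fin.snoc c' j : Fin (R'.card + 1) → N) a) = 1 := by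
      intro a
      induction a using Fin.lastCases with
      | last => simpa using hij
      | cast a'' => simpa using hc'1 a''
    have hTri : ∀ a b : Fin (R'.card + 1), a < b →
        H ((Fin.snoc e' i : Fin (R'.card + 1) → M) a) ((Fin.snoc c' j : Fin (R'.card + 1) → N) b) = 0 := by
      intro a b hab
      have hanl : a ≠ Fin.last _ := Fin.ne_last_of_lt hab
      have haeq : (a.castPred hanl).castSucc = a := Fin.castSucc_castPred a hanl
      induction b using Fin.lastCases with
      | last =>
        rw [Fin.snoc_last, ← haeq, Fin.snoc_castSucc]
        exact hzero _
      | cast b'' =>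
        rw [Fin.snoc_castSucc, ← haeq, Fin.snoc_castSucc]
        refine hc'0 _ _ ?_
        rw [Fin.lt_def] at hab ⊢
        simpa using hab
    refine ⟨fun k => (Fin.snoc e' i : Fin (R'.card + 1) → M) (Fin.cast hcast k),
      fun k => (Fin.snoc c' j : Fin (R'.card + 1) → N) (Fin.cast hcast k), ?_, ?_, ?_, ?_, ?_⟩
    · intro a b hab
      have := hE hab
      have h2 := congrArg Fin.val this
      simp only [Fin.coe_cast] at h2
      exact Fin.ext h2
    · intro k; exact hMem _
    · intro a b hab
      have := hC hab
      have h2 := congrArg Fin.val this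
      simp only [Fin.coe_cast] at h2
      exact Fin.ext h2
    · intro k; exact hDiag _
    · intro k l hkl
      refine hTri _ _ ?_
      rw [Fin.lt_def]
      simp only [Fin.coe_cast]
      exact hkl

theorem no_encodingStoppingSet_triangularEnum {M N : Type*} [Fintype M] [DecidableEq M]
    [Fintype N] (H : Matrix M N (ZMod 2))
    (hind : LinearIndependent (ZMod 2) (fun i : M => H i))
    (hno : ¬ ∃ R : Finset M, IsEncodingStoppingSet H R) :
    TriangularEnum H Finset.univ := by
  refine aux_triang H hno _ Finset.univ rfl ?_
  exact hind.comp (fun x : (Finset.univ : Finset M) => x.1) Subtype.val_injective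
end

section
/- Suppose the rows of H are linearly independent over GF(2) and H contains no encoding stopping set. Then H admits a pseudo-tree structure. (Corollary 1: if a Tanner graph does not contain any encoding stopping set, then it can be represented by a union of pseudo-trees.) -/
lemma exists_leaf {M N : Type*} [Fintype M] [DecidableEq M] [Fintype N]
    (H : Matrix M N (ZMod 2))
    (hind : LinearIndependent (ZMod 2) (fun i : M => H i))
    (hno : ¬ ∃ R : Finset M, IsEncodingStoppingSet H R)
    (R : Finset M) (hR : R.Nonempty) :
    ∃ i ∈ R, ∃ j, H i j = 1 ∧ ∀ i' ∈ R, H i' j = 1 → i' = i := by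
  by_contra h
  push_neg at h
  apply hno
  refine ⟨R, hR, ?_, ?_⟩
  · exact hind.comp (Subtype.val : R → M) Subtype.val_injective
  · rintro j ⟨i, hi, hij⟩
    obtain ⟨i', hi', hij', hne⟩ := h i hi j hij
    refine Finset.one_lt_card.mpr ⟨i, ?_, i', ?_, fun e => hne e.symm⟩ <;>
      simp [Finset.mem_filter, *]

lemma aux_pt {M N : Type*} [Fintype M] [DecidableEq M] [Fintype N] [Nonempty N]
    (H : Matrix M N (ZMod 2))
    (hind : LinearIndependent (ZMod 2) (fun i : M => H i))
    (hno : ¬ ∃ R : Finset M, IsEncodingStoppingSet H R) :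
    ∀ R : Finset M, ∃ (p : M → N) (t : M → ℕ),
      (∀ i ∈ R, ∀ i' ∈ R, p i = p i' → i = i') ∧
      (∀ i ∈ R, H i (p i) = 1) ∧
      (∀ i ∈ R, ∀ i' ∈ R, i ≠ i' → H i (p i') = 1 → t i < t i') := by
  intro R
  induction R using Finset.strongInduction with
  | _ R IH =>
    rcases R.eq_empty_or_nonempty with rfl | hR
    · exact ⟨fun _ => Classical.arbitrary N, fun _ => 0, by simp, by simp, by simp⟩
    · obtain ⟨i, hi, j, hij, huniq⟩ := exists_leaf H hind hno R hR
      obtain ⟨p', t', hinj, hpar, htier⟩ := IH (R.erase i) (Finset.erase_ssubset hi)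
      refine ⟨Function.update p' i j, fun x => if x = i then 0 else t' x + 1, ?_, ?_, ?_⟩
      · intro a ha b hb hab
        by_cases hai : a = i <;> by_cases hbi : b = i
        · rw [hai, hbi]
        · exfalso
          rw [hai, Function.update_self, Function.update_of_ne hbi] at hab
          exact hbi (huniq b hb (hab ▸ hpar b (Finset.mem_erase.mpr ⟨hbi, hb⟩)))
        · exfalso
          rw [hbi, Function.update_self, Function.update_of_ne hai] at hab
          exact hai (huniq a ha (hab ▸ hpar a (Finset.mem_erase.mpr ⟨hai, ha⟩)))
        · rw [Function.update_of_ne hai, Function.update_of_ne hbi] at hab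
          exact hinj a (Finset.mem_erase.mpr ⟨hai, ha⟩) b (Finset.mem_erase.mpr ⟨hbi, hb⟩) hab
      · intro a ha
        by_cases hai : a = i
        · rw [hai, Function.update_self]; exact hij
        · rw [Function.update_of_ne hai]; exact hpar a (Finset.mem_erase.mpr ⟨hai, ha⟩)
      · intro a ha b hb hne hab
        by_cases hbi : b = i
        · exfalso
          rw [hbi, Function.update_self] at hab
          exact hne ((huniq a ha hab).trans hbi.symm)
        · rw [Function.update_of_ne hbi] at hab
          by_cases hai : a = i
          · simp [hai, hbi]
          · simp only [if_neg hai, if_neg hbi]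
            have := htier a (Finset.mem_erase.mpr ⟨hai, ha⟩) b (Finset.mem_erase.mpr ⟨hbi, hb⟩) hne hab
            omega

theorem no_encodingStoppingSet_pseudoTree {M N : Type*} [Fintype M] [DecidableEq M]
    [Fintype N] (H : Matrix M N (ZMod 2))
    (hind : LinearIndependent (ZMod 2) (fun i : M => H i))
    (hno : ¬ ∃ R : Finset M, IsEncodingStoppingSet H R) :
    PseudoTreeStructure H := by
  rcases isEmpty_or_nonempty M with hM | hM
  · exact ⟨fun i => (IsEmpty.false i).elim, fun _ => 0, fun a => (IsEmpty.false a).elim,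
      fun a => (IsEmpty.false a).elim, fun a => (IsEmpty.false a).elim⟩
  · have hN : Nonempty N := by
      obtain ⟨i⟩ := hM
      have : H i ≠ 0 := by
        intro h0
        exact hind.ne_zero i h0
      obtain ⟨j, _⟩ := Function.ne_iff.mp this
      exact ⟨j⟩
    obtain ⟨p, t, hinj, hpar, htier⟩ := aux_pt H hind hno Finset.univ
    exact ⟨p, t, fun a b => hinj a (Finset.mem_univ a) b (Finset.mem_univ b),
      fun i => hpar i (Finset.mem_univ i),
      fun i i' => htier i (Finset.mem_univ i) i' (Finset.mem_univ i')⟩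
end

section
/- If the Tanner graph of H is acyclic (a forest) and the rows of H are linearly independent over GF(2), then the set of all rows of H admits a triangular enumeration. (Corollary 4: the label-and-decide algorithm can encode any tree LDPC code, i.e., any code whose Tanner graph is cycle-free.) -/
/-- The Tanner graph of a parity check matrix `H` over GF(2): the simple bipartite graph
on `M ⊕ N` in which check node `i` is adjacent to bit node `j` iff `H i j = 1`. -/
def tannerGraph {M N : Type*} (H : Matrix M N (ZMod 2)) : SimpleGraph (M ⊕ N) where
  Adj v w :=
    match v, w with
    | Sum.inl i, Sum.inr j => H i j = 1
    | Sum.inr j, Sum.inl i => H i j = 1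
    | _, _ => False
  symm := by
    constructor
    intro v w h
    cases v <;> cases w <;> simp_all
  loopless := by
    constructor
    intro v h
    cases v <;> simp_all

section Aux
open SimpleGraph

lemma sup_edge_isAcyclic {V : Type*} {G : SimpleGraph V} (h : G.IsAcyclic)
    {u v : V} (hne : ¬G.Reachable u v) : (G ⊔ edge u v).IsAcyclic := by
  intro w p hp
  by_cases he : s(u, v) ∈ p.edges
  · have hcyc := (adj_and_reachable_delete_edges_iff_exists_cycle
      (G := G ⊔ edge u v) (v := u) (w := v)).mpr ⟨w, p, hp, he⟩
    apply hne
    refine hcyc.2.mono ?_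
    have : (G ⊔ edge u v) \ fromEdgeSet {s(u, v)} = (G ⊔ edge u v) \ edge u v := rfl
    change (G ⊔ edge u v) \ fromEdgeSet {s(u, v)} ≤ G
    rw [this, sup_sdiff_right_self]
    exact sdiff_le
  · have hall : ∀ e ∈ p.edges, e ∈ G.edgeSet := by
      intro e hep
      have := p.edges_subset_edgeSet hep
      rw [edgeSet_sup] at this
      rcases this with h1 | h1
      · exact h1
      · exfalso
        have : e ∈ ({s(u,v)} : Set (Sym2 V)) := by
          have := edgeSet_fromEdgeSet ({s(u,v)} : Set (Sym2 V))
          rw [show (edge u v : SimpleGraph V) = fromEdgeSet {s(u,v)} from rfl, this] at h1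
          exact h1.1
        simp only [Set.mem_singleton_iff] at this
        exact he (this ▸ hep)
    exact h (p.transfer G hall) (hp.transfer hall)

lemma exists_isTree_ge {V : Type*} [Fintype V] [Nonempty V] (G : SimpleGraph V)
    (h : G.IsAcyclic) : ∃ T, G ≤ T ∧ T.IsTree := by
  classical
  suffices H : ∀ n (G : SimpleGraph V), G.IsAcyclic →
      (Fintype.card V).choose 2 - G.edgeSet.ncard ≤ n → ∃ T, G ≤ T ∧ T.IsTree by
    exact H _ G h le_rfl
  intro n
  induction n with
  | zero =>
    intro G hG hle
    by_cases hc : G.Connected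
    · exact ⟨G, le_rfl, ⟨hc, hG⟩⟩
    · exfalso
      have hpc : ¬G.Preconnected := fun hp => hc ⟨hp⟩
      simp only [Preconnected, not_forall] at hpc
      obtain ⟨u, v, huv⟩ := hpc
      have hne : u ≠ v := fun e => huv (e ▸ Reachable.refl u)
      have hadj : ¬G.Adj u v := fun ha => huv ha.reachable
      have hins : (G ⊔ edge u v).edgeSet = insert s(u, v) G.edgeSet := by
        rw [edgeSet_sup, edge_edgeSet_of_ne hne, Set.union_singleton]
      have hn1 : (G ⊔ edge u v).edgeSet.ncard = G.edgeSet.ncard + 1 := by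
        rw [hins, Set.ncard_insert_of_notMem (by simpa using hadj) (Set.toFinite _)]
      have hb : (G ⊔ edge u v).edgeSet.ncard ≤ (Fintype.card V).choose 2 := by
        rw [Set.ncard_eq_toFinset_card']
        exact card_edgeFinset_le_card_choose_two
      omega
  | succ n ih =>
    intro G hG hle
    by_cases hc : G.Connected
    · exact ⟨G, le_rfl, ⟨hc, hG⟩⟩
    · have hpc : ¬G.Preconnected := fun hp => hc ⟨hp⟩
      simp only [Preconnected, not_forall] at hpc
      obtain ⟨u, v, huv⟩ := hpc
      have hne : u ≠ v := fun e => huv (e ▸ Reachable.refl u)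
      have hadj : ¬G.Adj u v := fun ha => huv ha.reachable
      have hins : (G ⊔ edge u v).edgeSet = insert s(u, v) G.edgeSet := by
        rw [edgeSet_sup, edge_edgeSet_of_ne hne, Set.union_singleton]
      have hn1 : (G ⊔ edge u v).edgeSet.ncard = G.edgeSet.ncard + 1 := by
        rw [hins, Set.ncard_insert_of_notMem (by simpa using hadj) (Set.toFinite _)]
      obtain ⟨T, hT1, hT2⟩ := ih (G ⊔ edge u v) (sup_edge_isAcyclic hG huv) (by omega)
      exact ⟨T, le_sup_left.trans hT1, hT2⟩

lemma isAcyclic_card_edgeFinset {V : Type*} [Fintype V] [Nonempty V] (G : SimpleGraph V)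
    [Fintype G.edgeSet] (h : G.IsAcyclic) : G.edgeFinset.card + 1 ≤ Fintype.card V := by
  classical
  obtain ⟨T, hle, hT⟩ := exists_isTree_ge G h
  rw [← hT.card_edgeFinset]
  have := Finset.card_le_card (edgeFinset_mono hle)
  omega

lemma exists_private_column {M N : Type*} [Fintype M] [DecidableEq M] [Fintype N]
    (H : Matrix M N (ZMod 2)) (hac : (tannerGraph H).IsAcyclic)
    (hind : LinearIndependent (ZMod 2) (fun i : M => H i))
    (R : Finset M) (hR : R.Nonempty) :
    ∃ i ∈ R, ∃ j, H i j = 1 ∧ ∀ i' ∈ R, i' ≠ i → H i' j = 0 := by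
  classical
  by_contra hno
  push_neg at hno
  have hone : ∀ x : ZMod 2, x ≠ 0 → x = 1 := by decide
  set C : Finset N := Finset.univ.filter (fun j => ∃ i ∈ R, H i j = 1) with hC
  -- |R| ≤ |C|
  have hRC : R.card ≤ C.card := by
    have hli : LinearIndependent (ZMod 2) (fun i : R => (fun j : C => H i j)) := by
      rw [Fintype.linearIndependent_iff]
      intro a ha
      have hz : ∑ i : R, a i • (H (i : M)) = 0 := by
        funext j
        by_cases hj : j ∈ C
        · have := congrFun ha ⟨j, hj⟩
          simpa [Finset.sum_apply] using this
        · have hz' : ∀ i : R, H (i : M) j = 0 := by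
            intro i
            by_contra hne
            exact hj (by
              simp only [hC, Finset.mem_filter, Finset.mem_univ, true_and]
              exact ⟨i, i.2, hone _ hne⟩)
          simp [Finset.sum_apply, hz']
      have hres : LinearIndependent (ZMod 2) (fun i : R => H (i : M)) :=
        hind.comp _ Subtype.val_injective
      exact Fintype.linearIndependent_iff.mp hres a hz
    have hcard := hli.fintype_card_le_finrank
    rwa [Module.finrank_pi, Fintype.card_coe, Fintype.card_coe] at hcard
  set E : Finset (M × N) := (R ×ˢ C).filter (fun p => H p.1 p.2 = 1) with hE
  -- each column of C has at least two incident rows in R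
  have h2C : 2 * C.card ≤ E.card := by
    have hfib : E.card = ∑ j ∈ C, (E.filter (fun p => p.2 = j)).card :=
      Finset.card_eq_sum_card_fiberwise (fun p hp => by
        simp only [hE, Finset.mem_coe, Finset.mem_filter, Finset.mem_product] at hp
        exact hp.1.2)
    have h2 : ∀ j ∈ C, 2 ≤ (E.filter (fun p => p.2 = j)).card := by
      intro j hj
      have hj' := hj
      simp only [hC, Finset.mem_filter, Finset.mem_univ, true_and] at hj'
      obtain ⟨i, hi, hij⟩ := hj'
      obtain ⟨i', hi', hii', hne0⟩ := hno i hi j hij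
      have hij' : H i' j = 1 := hone _ hne0
      have h1m : (i, j) ∈ E.filter (fun p => p.2 = j) := by
        simp [hE, Finset.mem_product, hi, hj, hij]
      have h2m : (i', j) ∈ E.filter (fun p => p.2 = j) := by
        simp [hE, Finset.mem_product, hi', hj, hij']
      have : ((i, j) : M × N) ≠ (i', j) := by
        simp [Prod.ext_iff]
        exact fun h => (hii' h.symm).elim
      exact Finset.one_lt_card.mpr ⟨_, h1m, _, h2m, this⟩
    calc 2 * C.card = ∑ _j ∈ C, 2 := by rw [Finset.sum_const, smul_eq_mul, mul_comm]
      _ ≤ ∑ j ∈ C, (E.filter (fun p => p.2 = j)).card := Finset.sum_le_sum h2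
      _ = E.card := hfib.symm
  -- the forest bound
  have hEb : E.card + 1 ≤ R.card + C.card := by
    set S : Finset (M ⊕ N) := R.image Sum.inl ∪ C.image Sum.inr with hS
    have hScard : S.card = R.card + C.card := by
      rw [Finset.card_union_of_disjoint (by
        simp only [Finset.disjoint_left, Finset.mem_image]
        rintro a ⟨i, _, rfl⟩ ⟨j, _, h⟩
        exact absurd h.symm (by simp)),
        Finset.card_image_of_injective _ Sum.inl_injective,
        Finset.card_image_of_injective _ Sum.inr_injective]
    haveI hne : Nonempty {x // x ∈ S} := by
      obtain ⟨i, hi⟩ := hR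
      exact ⟨⟨Sum.inl i, Finset.mem_union_left _ (Finset.mem_image_of_mem _ hi)⟩⟩
    haveI : Nonempty (Sym2 {x // x ∈ S}) :=
      ⟨s(Classical.arbitrary _, Classical.arbitrary _)⟩
    let G' : SimpleGraph {x // x ∈ S} := (tannerGraph H).comap (Subtype.val)
    have hG'ac : G'.IsAcyclic := by
      intro v c hc
      let hom : G' →g tannerGraph H := ⟨Subtype.val, fun h => h⟩
      exact hac _ (hc.map (f := hom) Subtype.val_injective)
    have hbound := isAcyclic_card_edgeFinset G' hG'ac
    have hcardS : Fintype.card {x // x ∈ S} = R.card + C.card := by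
      rw [Fintype.card_coe, hScard]
    have hinj : E.card ≤ G'.edgeFinset.card := by
      apply Finset.card_le_card_of_injOn (f := fun p =>
        if h : Sum.inl p.1 ∈ S ∧ Sum.inr p.2 ∈ S then
          s(⟨Sum.inl p.1, h.1⟩, (⟨Sum.inr p.2, h.2⟩ : {x // x ∈ S}))
        else Classical.arbitrary _)
      · intro p hp
        simp only [hE, Finset.mem_coe, Finset.mem_filter, Finset.mem_product] at hp
        have hmem : Sum.inl p.1 ∈ S ∧ Sum.inr p.2 ∈ S := by
          constructor
          · exact Finset.mem_union_left _ (Finset.mem_image_of_mem _ hp.1.1)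
          · exact Finset.mem_union_right _ (Finset.mem_image_of_mem _ hp.1.2)
        simp only [Finset.mem_coe]
        rw [dif_pos hmem, mem_edgeFinset, mem_edgeSet]
        exact hp.2
      · intro p hp q hq hfeq
        simp only [hE, Finset.mem_coe, Finset.mem_filter, Finset.mem_product] at hp hq
        have hmp : Sum.inl p.1 ∈ S ∧ Sum.inr p.2 ∈ S :=
          ⟨Finset.mem_union_left _ (Finset.mem_image_of_mem _ hp.1.1),
           Finset.mem_union_right _ (Finset.mem_image_of_mem _ hp.1.2)⟩
        have hmq : Sum.inl q.1 ∈ S ∧ Sum.inr q.2 ∈ S :=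
          ⟨Finset.mem_union_left _ (Finset.mem_image_of_mem _ hq.1.1),
           Finset.mem_union_right _ (Finset.mem_image_of_mem _ hq.1.2)⟩
        dsimp only at hfeq
        rw [dif_pos hmp, dif_pos hmq, Sym2.eq_iff] at hfeq
        rcases hfeq with ⟨h1, h2⟩ | ⟨h1, h2⟩
        · have e1 : Sum.inl p.1 = Sum.inl q.1 := congrArg Subtype.val h1
          have e2 : Sum.inr p.2 = Sum.inr q.2 := congrArg Subtype.val h2
          exact Prod.ext (Sum.inl_injective e1) (Sum.inr_injective e2)
        · exact absurd (congrArg Subtype.val h1) (by simp)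
    omega
  omega

end Aux

theorem acyclic_tanner_triangularEnum {M N : Type*} [Fintype M] [DecidableEq M]
    [Fintype N] (H : Matrix M N (ZMod 2))
    (hac : (tannerGraph H).IsAcyclic)
    (hind : LinearIndependent (ZMod 2) (fun i : M => H i)) :
    TriangularEnum H Finset.univ := by
  suffices haux : ∀ (n : ℕ) (R : Finset M), R.card = n → TriangularEnum H R from
    haux _ _ rfl
  intro n
  induction n with
  | zero =>
    intro R hR
    refine ⟨fun k => absurd k.isLt (by omega), fun k => absurd k.isLt (by omega),
      ?_, ?_, ?_, ?_, ?_⟩ <;>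
    · intro k
      exact absurd k.isLt (by omega)
  | succ n ih =>
    intro R hRcard
    have hRne : R.Nonempty := Finset.card_pos.mp (by omega)
    obtain ⟨i, hi, j, hij, hpriv⟩ := exists_private_column H hac hind R hRne
    set R' := R.erase i with hR'
    have hm : R'.card = n := by
      rw [hR', Finset.card_erase_of_mem hi, hRcard]
      omega
    obtain ⟨e', c', he'inj, he'mem, hc'inj, h1', h0'⟩ := ih R' hm
    have hcard : R.card = R'.card + 1 := by rw [hm, hRcard]
    refine ⟨fun k => if h : (k : ℕ) < R'.card then e' ⟨k, h⟩ else i,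
            fun k => if h : (k : ℕ) < R'.card then c' ⟨k, h⟩ else j, ?_, ?_, ?_, ?_, ?_⟩
    · intro a b hab
      dsimp only at hab
      split_ifs at hab with h1 h2 h2
      · have h := he'inj hab
        simp only [Fin.mk.injEq] at h
        exact Fin.ext h
      · exact absurd hab (Finset.ne_of_mem_erase (he'mem ⟨a, h1⟩))
      · exact absurd hab.symm (Finset.ne_of_mem_erase (he'mem ⟨b, h2⟩))
      · have ha : (a : ℕ) = R'.card := by omega
        have hb : (b : ℕ) = R'.card := by omega
        exact Fin.ext (ha.trans hb.symm)
    · intro k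
      dsimp only
      split_ifs with h
      · exact Finset.mem_of_mem_erase (he'mem ⟨k, h⟩)
      · exact hi
    · intro a b hab
      dsimp only at hab
      split_ifs at hab with h1 h2 h2
      · have h := hc'inj hab
        simp only [Fin.mk.injEq] at h
        exact Fin.ext h
      · exfalso
        have hmem := he'mem ⟨a, h1⟩
        have := hpriv (e' ⟨a, h1⟩) (Finset.mem_of_mem_erase hmem)
          (Finset.ne_of_mem_erase hmem)
        rw [← hab] at this
        rw [h1' ⟨a, h1⟩] at this
        exact one_ne_zero this
      · exfalso
        have hmem := he'mem ⟨b, h2⟩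
        have := hpriv (e' ⟨b, h2⟩) (Finset.mem_of_mem_erase hmem)
          (Finset.ne_of_mem_erase hmem)
        rw [hab] at this
        rw [h1' ⟨b, h2⟩] at this
        exact one_ne_zero this
      · have ha : (a : ℕ) = R'.card := by omega
        have hb : (b : ℕ) = R'.card := by omega
        exact Fin.ext (ha.trans hb.symm)
    · intro k
      dsimp only
      split_ifs with h
      · exact h1' ⟨k, h⟩
      · exact hij
    · intro k l hkl
      dsimp only
      have hkub : (k : ℕ) < R.card := k.isLt
      have hlub : (l : ℕ) < R.card := l.isLt
      by_cases hl : (l : ℕ) < R'.card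
      · have hk : (k : ℕ) < R'.card := lt_trans hkl hl
        rw [dif_pos hk, dif_pos hl]
        exact h0' ⟨k, hk⟩ ⟨l, hl⟩ hkl
      · have hk : (k : ℕ) < R'.card := by
          have : (l : ℕ) = R'.card := by omega
          omega
        rw [dif_pos hk, dif_neg hl]
        have hmem := he'mem ⟨k, hk⟩
        exact hpriv _ (Finset.mem_of_mem_erase hmem) (Finset.ne_of_mem_erase hmem)
end

section
/- Suppose the Tanner graph of H is acyclic (a forest). If R is a nonempty set of rows of H such that every column in the support of R has weight at least 2 within R, then the rows {H i : i ∈ R} are linearly dependent over GF(2). (Key step in the proof of Corollary 4: a cycle-free Tanner graph contains no encoding stopping set.) -/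
open SimpleGraph

lemma reachable_induce_of_walk {V : Type*} {G : SimpleGraph V} {t : Set V} {u w : V}
    (p : G.Walk u w) (hp : ∀ x ∈ p.support, x ∈ t) :
    (G.induce t).Reachable ⟨u, hp u p.start_mem_support⟩ ⟨w, hp w p.end_mem_support⟩ := by
  induction p with
  | nil => rfl
  | cons h q ih =>
    have hq : ∀ x ∈ q.support, x ∈ t := fun x hx => hp x (by simp [hx])
    exact (Adj.reachable (by simpa using h)).trans (ih hq)

lemma isAcyclic_induce {V : Type*} {G : SimpleGraph V} (h : G.IsAcyclic) (t : Set V) :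
    (G.induce t).IsAcyclic := fun _ c hc =>
  h (c.map (Embedding.induce (G := G) t).toHom) (hc.map (Embedding.induce (G := G) t).injective)

lemma induce_component_connected {V : Type*} {G : SimpleGraph V} (c : G.ConnectedComponent) :
    (G.induce c.supp).Connected := by
  classical
  obtain ⟨v, hv⟩ := c.exists_rep
  haveI : Nonempty ↑c.supp := ⟨⟨v, by rw [ConnectedComponent.mem_supp_iff]; exact hv⟩⟩
  refine ⟨?_⟩
  rintro ⟨a, ha⟩ ⟨b, hb⟩
  rw [ConnectedComponent.mem_supp_iff] at ha hb
  obtain ⟨p⟩ := ConnectedComponent.exact (ha.trans hb.symm)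
  have hp : ∀ x ∈ p.support, x ∈ c.supp := by
    intro x hx
    rw [ConnectedComponent.mem_supp_iff, ← ha]
    exact (ConnectedComponent.sound ⟨p.takeUntil x hx⟩).symm
  exact reachable_induce_of_walk p hp

lemma adj_mem_supp_iff {V : Type*} {G : SimpleGraph V} {c : G.ConnectedComponent} {a b : V}
    (hab : G.Adj a b) : a ∈ c.supp ↔ b ∈ c.supp := by
  simp only [ConnectedComponent.mem_supp_iff]
  rw [ConnectedComponent.sound hab.reachable]

lemma acyclic_card_edge_aux : ∀ (n : ℕ) {V : Type*} [Fintype V] (G : SimpleGraph V),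
    G.IsAcyclic → Nonempty V → Fintype.card V = n →
    Nat.card G.edgeSet + 1 ≤ n := by
  intro n
  induction n using Nat.strong_induction_on with
  | _ n ih =>
  intro V _ G hac hne hn
  classical
  obtain ⟨v⟩ := hne
  set c := G.connectedComponentMk v with hc
  set s := c.supp with hs
  rw [Nat.card_eq_fintype_card, ← SimpleGraph.edgeFinset_card]
  set A : Finset (V × V) := Finset.univ.filter (fun z : V × V => G.Adj z.1 z.2 ∧ z.1 ∈ s) with hA
  set B : Finset (V × V) := Finset.univ.filter (fun z : V × V => G.Adj z.1 z.2 ∧ z.1 ∉ s) with hB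
  have hsplitAB : 2 * G.edgeFinset.card = A.card + B.card := by
    rw [SimpleGraph.two_mul_card_edgeFinset]
    have e1 : (Finset.univ.filter fun (x, y) => G.Adj x y) =
        (Finset.univ.filter fun z : V × V => G.Adj z.1 z.2) := by
      apply Finset.filter_congr
      rintro ⟨x, y⟩ _
      simp
    rw [e1, ← Finset.card_filter_add_card_filter_not
      (s := Finset.univ.filter fun z : V × V => G.Adj z.1 z.2) (fun z => z.1 ∈ s)]
    congr 1
    · rw [hA, Finset.filter_filter]
    · rw [hB, Finset.filter_filter]
  have memA : ∀ z : V × V, z ∈ A ↔ G.Adj z.1 z.2 ∧ z.1 ∈ s := by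
    intro z; simp [hA]
  have memB : ∀ z : V × V, z ∈ B ↔ G.Adj z.1 z.2 ∧ z.1 ∉ s := by
    intro z; simp [hB]
  have hA2 : A.card = 2 * (G.induce s).edgeFinset.card := by
    rw [SimpleGraph.two_mul_card_edgeFinset]
    refine Finset.card_bij'
      (fun z hz => (⟨z.1, ((memA z).1 hz).2⟩,
        ⟨z.2, (adj_mem_supp_iff (c := c) ((memA z).1 hz).1).1 ((memA z).1 hz).2⟩))
      (fun w _ => ((w.1 : V), (w.2 : V))) ?_ ?_ ?_ ?_
    · intro z hz
      simpa using ((memA z).1 hz).1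
    · intro w hw
      rw [memA]
      refine ⟨by simpa using hw, w.1.2⟩
    · intro z hz; rfl
    · intro w hw; rfl
  have hB2 : B.card = 2 * (G.induce sᶜ).edgeFinset.card := by
    rw [SimpleGraph.two_mul_card_edgeFinset]
    refine Finset.card_bij'
      (fun z hz => (⟨z.1, ((memB z).1 hz).2⟩,
        ⟨z.2, fun h2 => ((memB z).1 hz).2
          ((adj_mem_supp_iff (c := c) ((memB z).1 hz).1).2 h2)⟩))
      (fun w _ => ((w.1 : V), (w.2 : V))) ?_ ?_ ?_ ?_
    · intro z hz
      simpa using ((memB z).1 hz).1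
    · intro w hw
      rw [memB]
      refine ⟨by simpa using hw, w.1.2⟩
    · intro z hz; rfl
    · intro w hw; rfl
  have hTree : (G.induce s).IsTree := ⟨induce_component_connected c, isAcyclic_induce hac s⟩
  have hE1 : (G.induce s).edgeFinset.card + 1 = Fintype.card ↥s := hTree.card_edgeFinset
  have hvmem : v ∈ s := by rw [hs, ConnectedComponent.mem_supp_iff, hc]
  haveI : Nonempty ↥s := ⟨⟨v, hvmem⟩⟩
  have hposs : 1 ≤ Fintype.card ↥s := Fintype.card_pos
  have hcards : Fintype.card ↥s + Fintype.card ↥(sᶜ) = n := by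
    have e := Fintype.card_congr (Equiv.sumCompl (· ∈ s))
    rw [Fintype.card_sum] at e
    have e2 : Fintype.card ↥(sᶜ) = Fintype.card {x // ¬ x ∈ s} :=
      Fintype.card_congr (Equiv.subtypeEquivRight (fun x => Set.mem_compl_iff s x))
    have e3 : Fintype.card ↥s = Fintype.card {x // x ∈ s} := Fintype.card_congr (Equiv.refl _)
    omega
  rcases Nat.eq_zero_or_pos (Fintype.card ↥(sᶜ)) with h0 | hpos2
  · haveI : IsEmpty ↥(sᶜ) := Fintype.card_eq_zero_iff.1 h0
    have hB0 : B.card = 0 := by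
      have he : (G.induce sᶜ).edgeFinset = ∅ := Finset.eq_empty_of_isEmpty _
      rw [hB2, he]
      simp
    omega
  · haveI : Nonempty ↥(sᶜ) := Fintype.card_pos_iff.1 hpos2
    have ihp := ih (Fintype.card ↥(sᶜ)) (by omega) (G.induce sᶜ) (isAcyclic_induce hac sᶜ)
      ‹_› rfl
    rw [Nat.card_eq_fintype_card, ← SimpleGraph.edgeFinset_card] at ihp
    omega

theorem acyclic_tanner_no_encodingStoppingSet {M N : Type*} [Fintype M] [DecidableEq M]
    [Fintype N] (H : Matrix M N (ZMod 2))
    (hac : (tannerGraph H).IsAcyclic)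
    (R : Finset M) (hne : R.Nonempty)
    (hwt : ∀ j, (∃ i ∈ R, H i j = 1) → 2 ≤ (R.filter (fun i => H i j = 1)).card) :
    ¬ LinearIndependent (ZMod 2) (fun i : R => H i) := by
  classical
  intro hli
  set S : Finset N := Finset.univ.filter (fun j => ∃ i ∈ R, H i j = 1) with hS
  have hSmem : ∀ j, j ∈ S ↔ ∃ i ∈ R, H i j = 1 := by intro j; simp [hS]
  set U : Finset (M ⊕ N) := R.image Sum.inl ∪ S.image Sum.inr with hU
  set G' := (tannerGraph H).induce (↑U : Set (M ⊕ N)) with hG'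
  set P : Finset (M × N) := (R ×ˢ Finset.univ).filter (fun p => H p.1 p.2 = 1) with hP
  have hPmem : ∀ p : M × N, p ∈ P ↔ p.1 ∈ R ∧ H p.1 p.2 = 1 := by intro p; simp [hP]
  have hUinl : ∀ {i : M}, i ∈ R → (Sum.inl i : M ⊕ N) ∈ U := by
    intro i hi; rw [hU]; exact Finset.mem_union_left _ (Finset.mem_image_of_mem _ hi)
  have hUinr : ∀ {j : N}, j ∈ S → (Sum.inr j : M ⊕ N) ∈ U := by
    intro j hj; rw [hU]; exact Finset.mem_union_right _ (Finset.mem_image_of_mem _ hj)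
  -- lower bound on the number of pairs
  have hPcard : 2 * S.card ≤ P.card := by
    rw [Finset.card_eq_sum_card_fiberwise (f := fun p : M × N => p.2) (t := S)
      (fun p hp => (hSmem p.2).2 ⟨p.1, ((hPmem p).1 hp).1, ((hPmem p).1 hp).2⟩)]
    calc 2 * S.card = ∑ _j ∈ S, 2 := by rw [Finset.sum_const, smul_eq_mul, mul_comm]
    _ ≤ ∑ j ∈ S, (P.filter fun p => p.2 = j).card := by
        apply Finset.sum_le_sum
        intro j hj
        refine le_trans (hwt j ((hSmem j).1 hj)) ?_
        apply Finset.card_le_card_of_injOn (fun i => (i, j))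
        · intro i hi
          simp only [Finset.mem_coe, Finset.mem_filter] at hi ⊢
          exact ⟨(hPmem (i, j)).2 ⟨hi.1, hi.2⟩, trivial⟩
        · intro a _ b _ hab
          exact congrArg Prod.fst hab
  -- the injection into adjacent pairs of the induced graph
  let f : ({p : M × N // p ∈ P} ⊕ {p : M × N // p ∈ P}) →
      {z : ↥(↑U : Set (M ⊕ N)) × ↥(↑U : Set (M ⊕ N)) // G'.Adj z.1 z.2} := fun x =>
    match x with
    | Sum.inl ⟨p, hp⟩ =>
      ⟨(⟨Sum.inl p.1, hUinl ((hPmem p).1 hp).1⟩,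
        ⟨Sum.inr p.2, hUinr ((hSmem p.2).2 ⟨p.1, ((hPmem p).1 hp).1, ((hPmem p).1 hp).2⟩)⟩),
        ((hPmem p).1 hp).2⟩
    | Sum.inr ⟨p, hp⟩ =>
      ⟨(⟨Sum.inr p.2, hUinr ((hSmem p.2).2 ⟨p.1, ((hPmem p).1 hp).1, ((hPmem p).1 hp).2⟩)⟩,
        ⟨Sum.inl p.1, hUinl ((hPmem p).1 hp).1⟩),
        ((hPmem p).1 hp).2⟩
  have hf : Function.Injective f := by
    rintro (⟨p, hp⟩ | ⟨p, hp⟩) (⟨q, hq⟩ | ⟨q, hq⟩) hab <;>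
      simp only [f, Subtype.ext_iff, Subtype.coe_mk, Prod.ext_iff, Sum.inl.injEq, Sum.inr.injEq] at hab <;>
      first
        | (exact absurd hab.1 (by simp))
        | (exact congrArg _ (Subtype.ext (Prod.ext hab.1 hab.2)))
        | (exact congrArg _ (Subtype.ext (Prod.ext hab.2 hab.1)))
  have hEl : 2 * P.card ≤ 2 * G'.edgeFinset.card := by
    rw [SimpleGraph.two_mul_card_edgeFinset]
    have e1 : (Finset.univ.filter fun (x, y) => G'.Adj x y) =
        (Finset.univ.filter fun z : ↥(↑U : Set (M ⊕ N)) × ↥(↑U : Set (M ⊕ N)) =>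
          G'.Adj z.1 z.2) := by
      apply Finset.filter_congr
      rintro ⟨x, y⟩ _
      simp
    rw [e1, ← Fintype.card_subtype]
    have e2 : 2 * P.card = Fintype.card ({p : M × N // p ∈ P} ⊕ {p : M × N // p ∈ P}) := by
      rw [Fintype.card_sum]
      have : Fintype.card {p : M × N // p ∈ P} = P.card := Fintype.card_coe P
      omega
    rw [e2]
    exact Fintype.card_le_of_injective f hf
  -- upper bound from acyclicity
  haveI hneU : Nonempty ↥(↑U : Set (M ⊕ N)) := by
    obtain ⟨i, hi⟩ := hne
    exact ⟨⟨Sum.inl i, hUinl hi⟩⟩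
  have hupper := acyclic_card_edge_aux (Fintype.card ↥(↑U : Set (M ⊕ N))) G'
    (isAcyclic_induce hac _) hneU rfl
  rw [Nat.card_eq_fintype_card, ← SimpleGraph.edgeFinset_card] at hupper
  have hUcard : Fintype.card ↥(↑U : Set (M ⊕ N)) ≤ R.card + S.card := by
    have e3 : Fintype.card ↥(↑U : Set (M ⊕ N)) = U.card := by
      rw [← Fintype.card_coe U]
      exact Fintype.card_congr (Equiv.subtypeEquivRight fun x => by simp)
    rw [e3]
    exact le_trans (Finset.card_union_le _ _)
      (add_le_add Finset.card_image_le Finset.card_image_le)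
  have hfinal : S.card + 1 ≤ R.card := by omega
  -- linear algebra: the rows live in a space of dimension S.card
  have hcard2 : R.card ≤ S.card := by
    set g : ↥R → ↥S → ZMod 2 := fun i j => H i.1 j.1 with hg
    have hli2 : LinearIndependent (ZMod 2) g := by
      rw [Fintype.linearIndependent_iff] at hli ⊢
      intro gc hsum i
      apply hli gc _ i
      funext j
      by_cases hj : j ∈ S
      · have := congrFun hsum ⟨j, hj⟩
        simpa [g, Finset.sum_apply] using this
      · have hz : ∀ i : ↥R, H i.1 j = 0 := by
          intro i
          have hne1 : ¬ H i.1 j = 1 := fun h1 => hj ((hSmem j).2 ⟨i.1, i.2, h1⟩)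
          have h01 : ∀ x : ZMod 2, x = 0 ∨ x = 1 := by decide
          rcases h01 (H i.1 j) with h | h
          · exact h
          · exact absurd h hne1
        simp [Finset.sum_apply, hz]
    have hle := hli2.fintype_card_le_finrank
    rw [Module.finrank_fintype_fun_eq_card] at hle
    simpa [Fintype.card_coe] using hle
  omega
end

section
/- Suppose every column of H has weight at most 2 within the full set of rows (the code is a cycle code, i.e., each bit node has degree at most 2). If R is a nonempty set of rows of H such that every column in the support of R has weight at least 2 within R, then the sum over GF(2) of the rows {H i : i ∈ R} is the zero vector; in particular these rows are linearly dependent. (Key step in the proof of Corollary 2: a cycle code contains no encoding stopping set.) -/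
theorem cycleCode_stoppingSet_rows_sum_zero {M N : Type*} [Fintype M] [DecidableEq M]
    [Fintype N] (H : Matrix M N (ZMod 2))
    (hdeg : ∀ j, (Finset.univ.filter (fun i => H i j = 1)).card ≤ 2)
    (R : Finset M) (hne : R.Nonempty)
    (hwt : ∀ j, (∃ i ∈ R, H i j = 1) → 2 ≤ (R.filter (fun i => H i j = 1)).card) :
    (∑ i ∈ R, H i) = 0 ∧ ¬ LinearIndependent (ZMod 2) (fun i : R => H i) := by
  have hzero : ∀ x : ZMod 2, x ≠ 1 → x = 0 := by decide
  have hsum : (∑ i ∈ R, H i) = 0 := by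
    funext j
    have hs : (∑ i ∈ R, H i) j = ∑ i ∈ R, H i j := Finset.sum_apply _ _ _
    rw [hs]
    show _ = (0 : ZMod 2)
    have hterm : ∀ i ∈ R, H i j = if H i j = 1 then 1 else 0 := by
      intro i _
      by_cases h : H i j = 1
      · simp [h]
      · simp [h, hzero _ h]
    rw [Finset.sum_congr rfl hterm, Finset.sum_boole]
    by_cases hex : ∃ i ∈ R, H i j = 1
    · have h2 := hwt j hex
      have h2' : (R.filter (fun i => H i j = 1)).card ≤ 2 := by
        refine le_trans (Finset.card_le_card ?_) (hdeg j)
        exact Finset.filter_subset_filter _ (Finset.subset_univ R)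
      have : (R.filter (fun i => H i j = 1)).card = 2 := le_antisymm h2' h2
      rw [this]
      decide
    · have : R.filter (fun i => H i j = 1) = ∅ := by
        push_neg at hex
        exact Finset.filter_false_of_mem hex
      rw [this]
      simp
  refine ⟨hsum, ?_⟩
  intro hli
  rw [Fintype.linearIndependent_iff] at hli
  obtain ⟨i, hi⟩ := hne
  have h1 := hli (fun _ => 1) ?_ ⟨i, hi⟩
  · exact one_ne_zero h1
  · simp only [one_smul]
    rw [← Finset.sum_coe_sort R (fun i => H i)] at hsum
    exact hsum
end

section
/- Suppose every column of H has weight at most 2 within the full set of rows and the rows of H are linearly independent over GF(2). Then the set of all rows of H admits a triangular enumeration. (Corollary 2: a regular LDPC code with column weight 2, i.e., a cycle code, can be encoded by the label-and-decide algorithm.) -/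
lemma exists_pivot {M N : Type*} [Fintype M] [DecidableEq M] [Fintype N]
    (H : Matrix M N (ZMod 2))
    (hdeg : ∀ j, (Finset.univ.filter (fun i => H i j = 1)).card ≤ 2)
    (hind : LinearIndependent (ZMod 2) (fun i : M => H i))
    (S : Finset M) (hne : S.Nonempty) :
    ∃ i ∈ S, ∃ j, H i j = 1 ∧ ∀ i' ∈ S, i' ≠ i → H i' j = 0 := by
  have h01 : ∀ x : ZMod 2, x ≠ 1 → x = 0 := by decide
  have hsum : ∑ i ∈ S, H i ≠ 0 := by
    intro h
    obtain ⟨i0, hi0⟩ := hne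
    have := linearIndependent_iff'.mp hind S (fun _ => 1) (by simpa using h) i0 hi0
    exact one_ne_zero this
  have hj : ∃ j, ∑ i ∈ S, H i j ≠ 0 := by
    by_contra hc
    push_neg at hc
    apply hsum
    funext j
    refine (Finset.sum_apply (M := fun _ : N => ZMod 2) j S (fun i => H i)).trans ?_
    exact hc j
  obtain ⟨j, hjne⟩ := hj
  set T := S.filter (fun i => H i j = 1) with hT
  have hsum2 : ∑ i ∈ S, H i j = (T.card : ZMod 2) := by
    rw [show ∑ i ∈ S, H i j = ∑ i ∈ S, (if H i j = 1 then (1 : ZMod 2) else 0) from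
      Finset.sum_congr rfl (by
        intro i _
        split
        · next h => exact h
        · next h => exact h01 _ h)]
    rw [Finset.sum_boole]
  have hcast : (T.card : ZMod 2) = 1 := by
    rw [← hsum2]
    have : ∀ x : ZMod 2, x ≠ 0 → x = 1 := by decide
    exact this _ hjne
  have hle : T.card ≤ 2 := by
    refine le_trans (Finset.card_le_card ?_) (hdeg j)
    exact Finset.filter_subset_filter _ (Finset.subset_univ S)
  have hcard1 : T.card = 1 := by
    interval_cases h : T.card
    · exact absurd hcast (by decide)
    · rfl
    · exact absurd hcast (by decide)
  obtain ⟨i, hi⟩ := Finset.card_eq_one.mp hcard1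
  have hiT : i ∈ T := by rw [hi]; exact Finset.mem_singleton_self i
  rw [hT, Finset.mem_filter] at hiT
  refine ⟨i, hiT.1, j, hiT.2, fun i' hi' hne' => ?_⟩
  apply h01
  intro h1
  have : i' ∈ T := by rw [hT, Finset.mem_filter]; exact ⟨hi', h1⟩
  rw [hi, Finset.mem_singleton] at this
  exact hne' this

lemma tri_aux {M N : Type*} [Fintype M] [DecidableEq M] [Fintype N]
    (H : Matrix M N (ZMod 2))
    (hdeg : ∀ j, (Finset.univ.filter (fun i => H i j = 1)).card ≤ 2)
    (hind : LinearIndependent (ZMod 2) (fun i : M => H i)) :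
    ∀ n (S : Finset M), S.card = n → TriangularEnum H S := by
  intro n
  induction n with
  | zero =>
    intro S hS
    refine ⟨fun k => absurd k.isLt (by omega), fun k => absurd k.isLt (by omega),
      ?_, ?_, ?_, ?_, ?_⟩ <;> intro k <;> exact absurd k.isLt (by omega)
  | succ n ih =>
    intro S hS
    have hne : S.Nonempty := by rw [← Finset.card_pos, hS]; omega
    obtain ⟨i, hiS, j, hij, hzero⟩ := exists_pivot H hdeg hind S hne
    set S' := S.erase i with hS'def
    have hS' : S'.card = n := by rw [hS'def, Finset.card_erase_of_mem hiS, hS]; omega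
    obtain ⟨e', c', he'inj, he'mem, hc'inj, h1, h0⟩ := ih S' hS'
    have hScard : S.card = S'.card + 1 := by omega
    have hmemS' : ∀ k, e' k ∈ S' := he'mem
    have he'ne : ∀ k, e' k ≠ i := fun k => Finset.ne_of_mem_erase (hmemS' k)
    have he'S : ∀ k, e' k ∈ S := fun k => Finset.mem_of_mem_erase (hmemS' k)
    have hc'ne : ∀ k, c' k ≠ j := by
      intro k hk
      have := h1 k
      rw [hk] at this
      have hz := hzero (e' k) (he'S k) (he'ne k)
      rw [hz] at this
      exact zero_ne_one this
    refine ⟨fun k => if h : k.1 < S'.card then e' ⟨k.1, h⟩ else i,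
            fun k => if h : k.1 < S'.card then c' ⟨k.1, h⟩ else j,
            ?_, ?_, ?_, ?_, ?_⟩
    · intro a b hab
      dsimp only at hab
      split at hab <;> split at hab
      · next ha hb =>
        have h2 := he'inj hab
        simp only [Fin.mk.injEq] at h2
        exact Fin.ext h2
      · next ha hb => exact absurd hab (he'ne _)
      · next ha hb => exact absurd hab.symm (he'ne _)
      · next ha hb =>
        have : a.1 = b.1 := by have := a.isLt; have := b.isLt; omega
        exact Fin.ext this
    · intro k
      dsimp only
      split
      · exact he'S _
      · exact hiS
    · intro a b hab
      dsimp only at hab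
      split at hab <;> split at hab
      · next ha hb =>
        have h2 := hc'inj hab
        simp only [Fin.mk.injEq] at h2
        exact Fin.ext h2
      · next ha hb => exact absurd hab (hc'ne _)
      · next ha hb => exact absurd hab.symm (hc'ne _)
      · next ha hb =>
        have : a.1 = b.1 := by have := a.isLt; have := b.isLt; omega
        exact Fin.ext this
    · intro k
      dsimp only
      split
      · exact h1 _
      · exact hij
    · intro k l hkl
      dsimp only
      have hklv : k.1 < l.1 := hkl
      by_cases hl : l.1 < S'.card
      · have hk : k.1 < S'.card := lt_trans hklv hl
        rw [dif_pos hk, dif_pos hl]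
        exact h0 ⟨k.1, hk⟩ ⟨l.1, hl⟩ hklv
      · have hk : k.1 < S'.card := by have := l.isLt; omega
        rw [dif_pos hk, dif_neg hl]
        exact hzero _ (he'S _) (he'ne _)

theorem cycleCode_triangularEnum {M N : Type*} [Fintype M] [DecidableEq M] [Fintype N]
    (H : Matrix M N (ZMod 2))
    (hdeg : ∀ j, (Finset.univ.filter (fun i => H i j = 1)).card ≤ 2)
    (hind : LinearIndependent (ZMod 2) (fun i : M => H i)) :
    TriangularEnum H Finset.univ := by
  exact tri_aux H hdeg hind _ Finset.univ rfl
end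

section
/- Suppose there exist an enumeration r_1, …, r_m of all rows of H and pairwise distinct columns c_1, …, c_m such that H (r_i) (c_i) = 1 for every i and H (r_i) (c_j) = 0 whenever j < i (i.e., after row and column permutations H is upper triangular with ones on the diagonal). Then for every nonempty set R of rows of H there exists a column whose weight within R is exactly 1; in particular H contains no encoding stopping set. (Corollary 3: if the parity check matrix can be transformed into an upper triangular matrix by row and column permutations, then the code can be encoded by the label-and-decide algorithm.) -/
theorem upperTriangular_no_encodingStoppingSet {M N : Type*} [Fintype M] [DecidableEq M]
    [Fintype N] (H : Matrix M N (ZMod 2)) (m : ℕ)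
    (r : Fin m → M) (c : Fin m → N)
    (hr : Function.Bijective r) (hc : Function.Injective c)
    (hdiag : ∀ i, H (r i) (c i) = 1)
    (htri : ∀ i j : Fin m, j < i → H (r i) (c j) = 0) :
    (∀ R : Finset M, R.Nonempty →
      ∃ j, (R.filter (fun i => H i j = 1)).card = 1) ∧
    ¬ ∃ R : Finset M, IsEncodingStoppingSet H R := by
  have key : ∀ R : Finset M, R.Nonempty →
      ∃ j, (R.filter (fun i => H i j = 1)).card = 1 := by
    intro R hR
    set S : Finset (Fin m) := Finset.univ.filter (fun k => r k ∈ R) with hS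
    have hSne : S.Nonempty := by
      obtain ⟨x, hx⟩ := hR
      obtain ⟨k, rfl⟩ := hr.2 x
      exact ⟨k, by simp [hS, hx]⟩
    set i := S.min' hSne with hi
    have hiS : i ∈ S := S.min'_mem hSne
    have hiR : r i ∈ R := by simpa [hS] using hiS
    refine ⟨c i, ?_⟩
    have : R.filter (fun a => H a (c i) = 1) = {r i} := by
      ext a
      simp only [Finset.mem_filter, Finset.mem_singleton]
      constructor
      · rintro ⟨haR, ha1⟩
        obtain ⟨k, rfl⟩ := hr.2 a
        have hkS : k ∈ S := by simp [hS, haR]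
        have hik : i ≤ k := S.min'_le k hkS
        rcases lt_or_eq_of_le hik with h | h
        · exact absurd ha1 (by simp [htri k i h])
        · rw [h]
      · rintro rfl
        exact ⟨hiR, hdiag i⟩
    rw [this, Finset.card_singleton]
  refine ⟨key, ?_⟩
  rintro ⟨R, hne, _, h2⟩
  obtain ⟨j, hj⟩ := key R hne
  have : ∃ i ∈ R, H i j = 1 := by
    have := hj
    rcases Finset.card_eq_one.mp hj with ⟨a, ha⟩
    have : a ∈ R.filter (fun i => H i j = 1) := ha ▸ Finset.mem_singleton_self a
    simp only [Finset.mem_filter] at this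
    exact ⟨a, this.1, this.2⟩
  have := h2 j this
  omega
end

section
/- Let H : Matrix (Fin m) (Fin n) (ZMod 2), let j : Fin n be a column, and let T be a set of rows. Define the split matrix H' : Matrix (Fin (m+1)) (Fin (n+1)) (ZMod 2) by: for every row i < m and column k < n with k ≠ j, H' i k = H i k; H' i j = H i j if i ∈ T and H' i j = 0 otherwise; the new last column satisfies H' i n = H i j if i ∉ T and H' i n = 0 otherwise; and the new last row satisfies H' m j = 1, H' m n = 1, and H' m k = 0 for every column k ∉ {j, n}. Then the map sending x : Fin n → ZMod 2 to its extension x' : Fin (n+1) → ZMod 2 with x' agreeing with x on Fin n and x' n = x j is a bijection from the code {x : H.mulVec x = 0} onto the code {y : H'.mulVec y = 0}. (Key step in the proof of Theorem 4: splitting a bit node into two bit nodes joined by an auxiliary degree-2 check node yields an equivalent code.) -/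
theorem bitNode_splitting_code_equiv (m n : ℕ)
    (H : Matrix (Fin m) (Fin n) (ZMod 2)) (j : Fin n) (T : Finset (Fin m))
    (H' : Matrix (Fin (m + 1)) (Fin (n + 1)) (ZMod 2))
    (hold : ∀ (i : Fin m) (k : Fin n), k ≠ j →
      H' i.castSucc k.castSucc = H i k)
    (hsplitj : ∀ i : Fin m,
      H' i.castSucc j.castSucc = if i ∈ T then H i j else 0)
    (hsplitn : ∀ i : Fin m,
      H' i.castSucc (Fin.last n) = if i ∈ T then 0 else H i j)
    (hauxj : H' (Fin.last m) j.castSucc = 1)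
    (hauxn : H' (Fin.last m) (Fin.last n) = 1)
    (hauxz : ∀ k : Fin n, k ≠ j → H' (Fin.last m) k.castSucc = 0) :
    Set.BijOn (fun x : Fin n → ZMod 2 => Fin.snoc x (x j))
      {x | H.mulVec x = 0} {y | H'.mulVec y = 0} := by
  have key : ∀ x : Fin n → ZMod 2,
      H'.mulVec (Fin.snoc x (x j)) = Fin.snoc (H.mulVec x) 0 := by
    intro x
    funext i
    refine Fin.lastCases ?_ ?_ i
    · simp only [Matrix.mulVec, dotProduct, Fin.snoc_last]
      rw [Fin.sum_univ_castSucc]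
      simp only [Fin.snoc_castSucc, Fin.snoc_last, hauxn, one_mul]
      have h1 : ∀ k : Fin n, H' (Fin.last m) k.castSucc * x k
          = if k = j then x j else 0 := by
        intro k
        by_cases hk : k = j
        · subst hk; rw [hauxj]; simp
        · rw [hauxz k hk]; simp [hk]
      rw [Finset.sum_congr rfl (fun k _ => h1 k), Finset.sum_ite_eq' Finset.univ j]
      simp only [Finset.mem_univ, if_true]
      exact CharTwo.add_self_eq_zero _
    · intro i
      simp only [Fin.snoc_castSucc]
      show (H'.mulVec _) i.castSucc = H.mulVec x i
      simp only [Matrix.mulVec, dotProduct]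
      rw [Fin.sum_univ_castSucc]
      simp only [Fin.snoc_castSucc, Fin.snoc_last, hsplitn]
      by_cases hi : i ∈ T
      · simp only [hi, if_true, zero_mul, add_zero]
        refine Finset.sum_congr rfl fun k _ => ?_
        by_cases hk : k = j
        · subst hk; rw [hsplitj, if_pos hi]
        · rw [hold i k hk]
      · simp only [hi, if_false]
        have h2 : ∀ k : Fin n, H' i.castSucc k.castSucc * x k
            = if k = j then 0 else H i k * x k := by
          intro k
          by_cases hk : k = j
          · subst hk; rw [hsplitj, if_neg hi]; simp
          · rw [hold i k hk]; simp [hk]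
        rw [Finset.sum_congr rfl (fun k _ => h2 k)]
        have h3 : ∀ k : Fin n, H i k * x k
            = (if k = j then 0 else H i k * x k) + (if k = j then H i k * x k else 0) := by
          intro k; by_cases hk : k = j <;> simp [hk]
        conv_rhs => rw [Finset.sum_congr rfl (fun k _ => h3 k)]
        rw [Finset.sum_add_distrib, Finset.sum_ite_eq' Finset.univ j]
        simp
  refine ⟨?_, ?_, ?_⟩
  · intro x hx
    simp only [Set.mem_setOf_eq] at hx ⊢
    rw [key, hx]
    funext i
    refine Fin.lastCases ?_ (fun i => ?_) i <;> simp
  · intro x _ x' _ h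
    funext k
    have := congrFun h k.castSucc
    simpa using this
  · intro y hy
    simp only [Set.mem_setOf_eq] at hy
    set x : Fin n → ZMod 2 := fun k => y k.castSucc with hxdef
    have h0 := congrFun hy (Fin.last m)
    simp only [Matrix.mulVec, dotProduct, Pi.zero_apply] at h0
    rw [Fin.sum_univ_castSucc] at h0
    have h1 : ∀ k : Fin n, H' (Fin.last m) k.castSucc * y k.castSucc
        = if k = j then y j.castSucc else 0 := by
      intro k
      by_cases hk : k = j
      · subst hk; rw [hauxj]; simp
      · rw [hauxz k hk]; simp [hk]
    rw [Finset.sum_congr rfl (fun k _ => h1 k), Finset.sum_ite_eq' Finset.univ j,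
      hauxn, one_mul] at h0
    simp only [Finset.mem_univ, if_true] at h0
    have hlast : y (Fin.last n) = x j := by
      have h := eq_neg_of_add_eq_zero_right h0
      rwa [CharTwo.neg_eq] at h
    have hy' : y = Fin.snoc x (x j) := by
      funext k
      refine Fin.lastCases ?_ (fun k => ?_) k
      · simp [hlast]
      · simp [hxdef]
    rw [hy', key] at hy
    refine ⟨x, ?_, hy'.symm⟩
    simp only [Set.mem_setOf_eq]
    funext i
    have := congrFun hy i.castSucc
    simpa using this
end

section
/- Let u, v : N → ZMod 2 be vectors over GF(2), with N a finite type, such that u and v are linearly independent. Then there exist indices γ and δ in N such that u γ = 1, v δ = 1, and it is not the case that both v γ = 1 and u δ = 1; necessarily γ ≠ δ. (This is the existence claim of Appendix A: for two independent key check equations C_α, C_β of a 2-fold-constraint encoding stopping set, one can always choose reevaluated bits x_γ, x_δ satisfying conditions (D1)–(D3), namely that x_γ is constrained by C_α, x_δ is constrained by C_β, and x_γ and x_δ are not both contained in C_α and C_β.) -/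
theorem exists_reevaluated_bits {N : Type*} [Fintype N]
    (u v : N → ZMod 2)
    (hind : LinearIndependent (ZMod 2) ![u, v]) :
    ∃ γ δ : N, u γ = 1 ∧ v δ = 1 ∧ ¬(v γ = 1 ∧ u δ = 1) ∧ γ ≠ δ := by
  rw [linearIndependent_fin2] at hind
  obtain ⟨hv, hau⟩ := hind
  have hu : u ≠ 0 := by
    intro h; exact hau 0 (by simp [h])
  have huv : u ≠ v := by
    intro h; exact hau 1 (by simp [h])
  have one_of : ∀ x : ZMod 2, x ≠ 0 → x = 1 := by decide
  obtain ⟨i, hi⟩ : ∃ i, u i ≠ v i := by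
    by_contra h; push_neg at h; exact huv (funext h)
  rcases eq_or_ne (u i) 1 with h1 | h1
  · -- u i = 1, so v i ≠ 1, hence v i = 0
    have hvi : v i ≠ 1 := fun h => hi (h1.trans h.symm)
    obtain ⟨δ, hδ⟩ : ∃ δ, v δ ≠ 0 := by
      by_contra h; push_neg at h; exact hv (funext h)
    refine ⟨i, δ, h1, one_of _ hδ, fun hc => hvi hc.1, fun h => hδ (by rw [← h]; by_contra hv0; exact hvi (one_of _ hv0))⟩
  · -- u i ≠ 1, hence u i = 0, and v i = 1
    have hui : u i = 0 := by
      rcases (by decide : ∀ x : ZMod 2, x = 0 ∨ x = 1) (u i) with h | h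
      · exact h
      · exact absurd h h1
    have hvi : v i = 1 := by
      by_contra h
      have : v i = 0 := by
        rcases (by decide : ∀ x : ZMod 2, x = 0 ∨ x = 1) (v i) with h' | h'
        · exact h'
        · exact absurd h' h
      exact hi (hui.trans this.symm)
    obtain ⟨γ, hγ⟩ : ∃ γ, u γ ≠ 0 := by
      by_contra h; push_neg at h; exact hu (funext h)
    refine ⟨γ, i, one_of _ hγ, hvi, fun hc => h1 hc.2, fun h => hγ (h ▸ hui)⟩
end
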